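/- arXiv:0812.3721 — 3 statements merged into one kernel-verified Lean document; each statement's English description precedes it below -/
import Mathlib

section
/- Fix τ > 0, ξ ∈ ℝ \ {0}, c ∈ ℝ \ {0}, and let Υ(z) = ∑_{k ∈ ℤ} [1/(e^{kτ} z − ξ) − 1/(e^{kτ} c − ξ)] (symmetric limit of partial sums), defined for z ∈ ℂ with e^{kτ} z ≠ ξ for all k. Then Υ converges for such z and satisfies the functional equation Υ(e^{τ} z) = Υ(z) + 1/ξ. -/
open Complex Filter


lemma telescope_Icc (G : ℤ → ℂ) (N : ℕ) :
    ∑ k ∈ Finset.Icc (-(N : ℤ)) (N : ℤ), (G (k + 1) - G k) = G ((N : ℤ) + 1) - G (-(N : ℤ)) := by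
  induction N with
  | zero => simp
  | succ n ih =>
    have h1 : Finset.Icc (-((n+1 : ℕ) : ℤ)) ((n+1 : ℕ) : ℤ) =
        insert (-((n:ℤ)+1)) (insert ((n:ℤ)+1) (Finset.Icc (-(n:ℤ)) (n:ℤ))) := by
      ext x; simp; omega
    rw [h1, Finset.sum_insert (by simp; omega), Finset.sum_insert (by simp), ih]
    push_cast
    ring
section main
variable (τ ξ c : ℝ) (hτ : 0 < τ) (hξ : ξ ≠ 0) (hc : c ≠ 0)
    (hcξ : ∀ k : ℤ, Real.exp ((k : ℝ) * τ) * c ≠ ξ)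
    (z : ℂ) (hz0 : z ≠ 0)
    (hz : ∀ k : ℤ, (Real.exp ((k : ℝ) * τ) : ℂ) * z ≠ (ξ : ℂ))

include hτ hξ hc hcξ hz0 hz in
lemma upsilon_summable : Summable (fun k : ℤ =>
    (1 / ((Real.exp ((k : ℝ) * τ) : ℂ) * z - (ξ : ℂ)) -
      1 / ((Real.exp ((k : ℝ) * τ) : ℂ) * (c : ℂ) - (ξ : ℂ)))) := by
  set f : ℤ → ℂ := fun k =>
    (1 / ((Real.exp ((k : ℝ) * τ) : ℂ) * z - (ξ : ℂ)) -
      1 / ((Real.exp ((k : ℝ) * τ) : ℂ) * (c : ℂ) - (ξ : ℂ))) with hfdef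
  have hEz : ∀ k : ℤ, (Real.exp ((k : ℝ) * τ) : ℂ) * z - (ξ : ℂ) ≠ 0 :=
    fun k => sub_ne_zero.mpr (hz k)
  have hEc : ∀ k : ℤ, (Real.exp ((k : ℝ) * τ) : ℂ) * (c : ℂ) - (ξ : ℂ) ≠ 0 := by
    intro k
    rw [sub_ne_zero]
    exact_mod_cast fun h => hcξ k (by exact_mod_cast h)
  have hnorm : ∀ k : ℤ, ‖f k‖ = Real.exp ((k:ℝ)*τ) * ‖(c:ℂ) - z‖ /
      (‖(Real.exp ((k:ℝ)*τ):ℂ) * z - (ξ:ℂ)‖ * ‖(Real.exp ((k:ℝ)*τ):ℂ) * (c:ℂ) - (ξ:ℂ)‖) := by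
    intro k
    have hfk : f k = ((Real.exp ((k:ℝ)*τ):ℂ) * ((c:ℂ) - z)) /
        (((Real.exp ((k:ℝ)*τ):ℂ) * z - (ξ:ℂ)) * ((Real.exp ((k:ℝ)*τ):ℂ) * (c:ℂ) - (ξ:ℂ))) := by
      rw [hfdef]
      simp only
      rw [div_sub_div _ _ (hEz k) (hEc k)]
      congr 1
      ring
    rw [hfk, norm_div, norm_mul, norm_mul, Complex.norm_real, Real.norm_eq_abs,
      abs_of_pos (Real.exp_pos _)]
  have hr1 : Real.exp (-τ) < 1 := Real.exp_lt_one_iff.mpr (by linarith)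
  have hr0 : (0:ℝ) < Real.exp (-τ) := Real.exp_pos _
  have hgeo : Summable (fun n : ℕ => Real.exp (-τ) ^ n) :=
    summable_geometric_of_lt_one hr0.le hr1
  have hzn : 0 < ‖z‖ := norm_pos_iff.mpr hz0
  have hcn : 0 < |c| := abs_pos.mpr hc
  have hξn : 0 < |ξ| := abs_pos.mpr hξ
  -- positive side
  have hEtop : Tendsto (fun n : ℕ => Real.exp ((n:ℝ)*τ)) atTop atTop :=
    Real.tendsto_exp_atTop.comp (tendsto_natCast_atTop_atTop.atTop_mul_const hτ)
  have hpos : Summable (fun n : ℕ => f n) := by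
    apply Summable.of_norm_bounded_eventually_nat
      (g := fun n => (4 * ‖(c:ℂ) - z‖ / (‖z‖ * |c|)) * Real.exp (-τ) ^ n)
      (hgeo.mul_left _)
    have h1 : ∀ᶠ n : ℕ in atTop, 2 * |ξ| ≤ Real.exp ((n:ℝ)*τ) * ‖z‖ :=
      (hEtop.atTop_mul_const hzn).eventually_ge_atTop _
    have h2 : ∀ᶠ n : ℕ in atTop, 2 * |ξ| ≤ Real.exp ((n:ℝ)*τ) * |c| :=
      (hEtop.atTop_mul_const hcn).eventually_ge_atTop _
    filter_upwards [h1, h2] with n h1 h2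
    set E := Real.exp ((n:ℝ)*τ) with hEdef
    have hEp : 0 < E := Real.exp_pos _
    have hcast : (((n:ℤ):ℝ)) = (n:ℝ) := by push_cast; ring
    have hA : E * ‖z‖ / 2 ≤ ‖(E:ℂ) * z - (ξ:ℂ)‖ := by
      have hb := norm_sub_norm_le ((E:ℂ) * z) ((ξ:ℂ))
      simp only [norm_mul, Complex.norm_real, Real.norm_eq_abs, abs_of_pos hEp] at hb
      linarith
    have hB : E * |c| / 2 ≤ ‖(E:ℂ) * (c:ℂ) - (ξ:ℂ)‖ := by
      have hb := norm_sub_norm_le ((E:ℂ) * (c:ℂ)) ((ξ:ℂ))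
      simp only [norm_mul, Complex.norm_real, Real.norm_eq_abs, abs_of_pos hEp] at hb
      linarith
    have hden : (0:ℝ) < E * ‖z‖ / 2 * (E * |c| / 2) := by positivity
    have hpow : Real.exp (-τ) ^ n = E⁻¹ := by
      rw [hEdef, ← Real.exp_nat_mul, ← Real.exp_neg]
      ring_nf
    calc ‖f (n:ℤ)‖ = E * ‖(c:ℂ) - z‖ /
          (‖(E:ℂ) * z - (ξ:ℂ)‖ * ‖(E:ℂ) * (c:ℂ) - (ξ:ℂ)‖) := by
            rw [hnorm (n:ℤ), hcast]
      _ ≤ E * ‖(c:ℂ) - z‖ / (E * ‖z‖ / 2 * (E * |c| / 2)) := by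
            apply div_le_div_of_nonneg_left (by positivity) hden
            exact mul_le_mul hA hB (by positivity) (norm_nonneg _)
      _ = (4 * ‖(c:ℂ) - z‖ / (‖z‖ * |c|)) * Real.exp (-τ) ^ n := by
            rw [hpow, ← div_eq_mul_inv, div_div,
              div_eq_div_iff hden.ne' (by positivity : (‖z‖ * |c| * E : ℝ) ≠ 0)]
            ring
  -- negative side
  have hEbot : Tendsto (fun n : ℕ => Real.exp (-((n:ℝ)*τ))) atTop (nhds 0) :=
    Real.tendsto_exp_atBot.comp
      (tendsto_neg_atBot_iff.mpr (tendsto_natCast_atTop_atTop.atTop_mul_const hτ))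
  have hneg : Summable (fun n : ℕ => f (-(n:ℤ))) := by
    apply Summable.of_norm_bounded_eventually_nat
      (g := fun n => (4 * ‖(c:ℂ) - z‖ / (|ξ| * |ξ|)) * Real.exp (-τ) ^ n)
      (hgeo.mul_left _)
    have h1 : ∀ᶠ n : ℕ in atTop, Real.exp (-((n:ℝ)*τ)) * ‖z‖ ≤ |ξ| / 2 := by
      have := (hEbot.mul_const ‖z‖).eventually_le_const (show (0:ℝ)*‖z‖ < |ξ|/2 by
        rw [zero_mul]; positivity)
      simpa using this
    have h2 : ∀ᶠ n : ℕ in atTop, Real.exp (-((n:ℝ)*τ)) * |c| ≤ |ξ| / 2 := by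
      have := (hEbot.mul_const |c|).eventually_le_const (show (0:ℝ)*|c| < |ξ|/2 by
        rw [zero_mul]; positivity)
      simpa using this
    filter_upwards [h1, h2] with n h1 h2
    set E := Real.exp (-((n:ℝ)*τ)) with hEdef
    have hEp : 0 < E := Real.exp_pos _
    have hcast : (((-(n:ℤ)):ℝ)) = -((n:ℝ)) := by push_cast; ring
    have hA : |ξ| / 2 ≤ ‖(E:ℂ) * z - (ξ:ℂ)‖ := by
      have hb := norm_sub_norm_le ((ξ:ℂ)) ((E:ℂ) * z)
      rw [norm_sub_rev] at hb
      simp only [norm_mul, Complex.norm_real, Real.norm_eq_abs, abs_of_pos hEp] at hb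
      linarith
    have hB : |ξ| / 2 ≤ ‖(E:ℂ) * (c:ℂ) - (ξ:ℂ)‖ := by
      have hb := norm_sub_norm_le ((ξ:ℂ)) ((E:ℂ) * (c:ℂ))
      rw [norm_sub_rev] at hb
      simp only [norm_mul, Complex.norm_real, Real.norm_eq_abs, abs_of_pos hEp] at hb
      linarith
    have hden : (0:ℝ) < |ξ| / 2 * (|ξ| / 2) := by positivity
    have hpow : Real.exp (-τ) ^ n = E := by
      rw [hEdef, ← Real.exp_nat_mul]
      ring_nf
    calc ‖f (-(n:ℤ))‖ = E * ‖(c:ℂ) - z‖ /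
          (‖(E:ℂ) * z - (ξ:ℂ)‖ * ‖(E:ℂ) * (c:ℂ) - (ξ:ℂ)‖) := by
            rw [hnorm (-(n:ℤ))]
            simp only [Int.cast_neg, Int.cast_natCast, neg_mul]
            rfl
      _ ≤ E * ‖(c:ℂ) - z‖ / (|ξ| / 2 * (|ξ| / 2)) := by
            apply div_le_div_of_nonneg_left (by positivity) hden
            exact mul_le_mul hA hB (by positivity) (norm_nonneg _)
      _ = (4 * ‖(c:ℂ) - z‖ / (|ξ| * |ξ|)) * Real.exp (-τ) ^ n := by
            have hXX : (4 * ‖(c:ℂ) - z‖ / (|ξ| * |ξ|)) * E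
                = (4 * ‖(c:ℂ) - z‖ * E) / (|ξ| * |ξ|) := div_mul_eq_mul_div _ _ _
            rw [hpow, hXX, div_eq_div_iff hden.ne' (by positivity : (|ξ| * |ξ| : ℝ) ≠ 0)]
            ring
  exact Summable.of_nat_of_neg hpos hneg
end main

/-- for τ > 0, ξ, c ∈ ℝ \ {0}, the series
Υ(z) = ∑_{k∈ℤ} [1/(e^{kτ}z − ξ) − 1/(e^{kτ}c − ξ)] (symmetric limit) converges at
every admissible z ≠ 0, and satisfies Υ(e^{τ}z) = Υ(z) + 1/ξ. -/
theorem upsilon_functional_equation (τ ξ c : ℝ) (hτ : 0 < τ) (hξ : ξ ≠ 0) (hc : c ≠ 0)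
    (hcξ : ∀ k : ℤ, Real.exp ((k : ℝ) * τ) * c ≠ ξ)
    (z : ℂ) (hz0 : z ≠ 0)
    (hz : ∀ k : ℤ, (Real.exp ((k : ℝ) * τ) : ℂ) * z ≠ (ξ : ℂ)) :
    ∃ L : ℂ,
      Tendsto (fun N : ℕ => ∑ k ∈ Finset.Icc (-(N : ℤ)) (N : ℤ),
          (1 / ((Real.exp ((k : ℝ) * τ) : ℂ) * z - (ξ : ℂ)) -
            1 / ((Real.exp ((k : ℝ) * τ) : ℂ) * (c : ℂ) - (ξ : ℂ))))
        atTop (nhds L) ∧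
      Tendsto (fun N : ℕ => ∑ k ∈ Finset.Icc (-(N : ℤ)) (N : ℤ),
          (1 / ((Real.exp ((k : ℝ) * τ) : ℂ) * ((Real.exp τ : ℂ) * z) - (ξ : ℂ)) -
            1 / ((Real.exp ((k : ℝ) * τ) : ℂ) * (c : ℂ) - (ξ : ℂ))))
        atTop (nhds (L + 1 / (ξ : ℂ))) := by
  have hEz : ∀ k : ℤ, (Real.exp ((k : ℝ) * τ) : ℂ) * z - (ξ : ℂ) ≠ 0 :=
    fun k => sub_ne_zero.mpr (hz k)
  have hEc : ∀ k : ℤ, (Real.exp ((k : ℝ) * τ) : ℂ) * (c : ℂ) - (ξ : ℂ) ≠ 0 := by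
    intro k
    rw [sub_ne_zero]
    exact_mod_cast fun h => hcξ k (by exact_mod_cast h)
  set f : ℤ → ℂ := fun k =>
    (1 / ((Real.exp ((k : ℝ) * τ) : ℂ) * z - (ξ : ℂ)) -
      1 / ((Real.exp ((k : ℝ) * τ) : ℂ) * (c : ℂ) - (ξ : ℂ))) with hfdef
  set G : ℤ → ℂ := fun k => 1 / ((Real.exp ((k : ℝ) * τ) : ℂ) * (c : ℂ) - (ξ : ℂ)) with hGdef
  have hsum : Summable f := upsilon_summable τ ξ c hτ hξ hc hcξ z hz0 hz
  obtain ⟨L, hL⟩ : ∃ L, HasSum f L := ⟨_, hsum.hasSum⟩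
  have hIcc : Tendsto (fun N : ℕ => Finset.Icc (-(N:ℤ)) (N:ℤ)) atTop atTop := by
    apply tendsto_atTop_finset_of_monotone
    · intro a b hab
      apply Finset.Icc_subset_Icc <;> omega
    · intro x
      exact ⟨x.natAbs, by rw [Finset.mem_Icc]; omega⟩
  have hS1 : Tendsto (fun N : ℕ => ∑ k ∈ Finset.Icc (-(N:ℤ)) (N:ℤ), f k) atTop (nhds L) :=
    hL.comp hIcc
  refine ⟨L, hS1, ?_⟩
  -- decomposition of the shifted partial sums
  have key : ∀ N : ℕ, ∑ k ∈ Finset.Icc (-(N : ℤ)) (N : ℤ),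
      (1 / ((Real.exp ((k : ℝ) * τ) : ℂ) * ((Real.exp τ : ℂ) * z) - (ξ : ℂ)) -
        1 / ((Real.exp ((k : ℝ) * τ) : ℂ) * (c : ℂ) - (ξ : ℂ)))
      = (∑ k ∈ Finset.Icc (-(N:ℤ)) (N:ℤ), f k)
        + (f ((N:ℤ)+1) - f (-(N:ℤ))) + (G ((N:ℤ)+1) - G (-(N:ℤ))) := by
    intro N
    have hsummand : ∀ k : ℤ,
        1 / ((Real.exp ((k : ℝ) * τ) : ℂ) * ((Real.exp τ : ℂ) * z) - (ξ : ℂ)) -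
          1 / ((Real.exp ((k : ℝ) * τ) : ℂ) * (c : ℂ) - (ξ : ℂ))
        = f k + ((f (k+1) - f k) + (G (k+1) - G k)) := by
      intro k
      have h0 : (Real.exp (((k+1 : ℤ) : ℝ) * τ) : ℂ)
          = (Real.exp ((k : ℝ) * τ) : ℂ) * (Real.exp τ : ℂ) := by
        rw [← Complex.ofReal_mul, ← Real.exp_add]
        exact congrArg _ (congrArg Real.exp (by push_cast; ring))
      simp only [hfdef, hGdef]
      rw [h0]
      ring
    calc ∑ k ∈ Finset.Icc (-(N : ℤ)) (N : ℤ),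
        (1 / ((Real.exp ((k : ℝ) * τ) : ℂ) * ((Real.exp τ : ℂ) * z) - (ξ : ℂ)) -
          1 / ((Real.exp ((k : ℝ) * τ) : ℂ) * (c : ℂ) - (ξ : ℂ)))
        = ∑ k ∈ Finset.Icc (-(N : ℤ)) (N : ℤ),
            (f k + ((f (k+1) - f k) + (G (k+1) - G k))) :=
          Finset.sum_congr rfl (fun k _ => hsummand k)
      _ = (∑ k ∈ Finset.Icc (-(N:ℤ)) (N:ℤ), f k)
            + ((∑ k ∈ Finset.Icc (-(N:ℤ)) (N:ℤ), (f (k+1) - f k))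
              + (∑ k ∈ Finset.Icc (-(N:ℤ)) (N:ℤ), (G (k+1) - G k))) := by
          rw [Finset.sum_add_distrib, Finset.sum_add_distrib]
      _ = (∑ k ∈ Finset.Icc (-(N:ℤ)) (N:ℤ), f k)
            + (f ((N:ℤ)+1) - f (-(N:ℤ))) + (G ((N:ℤ)+1) - G (-(N:ℤ))) := by
          rw [telescope_Icc f N, telescope_Icc G N]
          ring
  -- limits of the boundary terms
  have T2 : Tendsto (fun N : ℕ => f ((N:ℤ)+1)) atTop (nhds 0) := by
    have hinj : Function.Injective (fun N : ℕ => (N:ℤ)+1) := fun a b h => by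
      simpa using h
    have := hsum.tendsto_cofinite_zero.comp hinj.tendsto_cofinite
    rwa [Nat.cofinite_eq_atTop] at this
  have T3 : Tendsto (fun N : ℕ => f (-(N:ℤ))) atTop (nhds 0) := by
    have hinj : Function.Injective (fun N : ℕ => -(N:ℤ)) := fun a b h => by
      simpa using h
    have := hsum.tendsto_cofinite_zero.comp hinj.tendsto_cofinite
    rwa [Nat.cofinite_eq_atTop] at this
  -- auxiliary exponential limits
  have hv : Tendsto (fun N : ℕ => ((Real.exp (-(((N:ℝ)+1)*τ)) : ℝ) : ℂ)) atTop (nhds 0) := by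
    have ha : Tendsto (fun N : ℕ => ((N:ℝ)+1)*τ) atTop atTop := by
      apply Tendsto.atTop_mul_const hτ
      exact tendsto_atTop_add_const_right atTop 1 tendsto_natCast_atTop_atTop
    have h1 : Tendsto (fun N : ℕ => Real.exp (-(((N:ℝ)+1)*τ))) atTop (nhds 0) :=
      Real.tendsto_exp_atBot.comp (tendsto_neg_atBot_iff.mpr ha)
    have := (Complex.continuous_ofReal.tendsto 0).comp h1
    simpa only [Function.comp_def, Complex.ofReal_zero] using this
  have hw : Tendsto (fun N : ℕ => ((Real.exp (((-(N:ℤ)) : ℝ)*τ) : ℝ) : ℂ)) atTop (nhds 0) := by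
    have h1 : Tendsto (fun N : ℕ => Real.exp (-((N:ℝ)*τ))) atTop (nhds 0) :=
      Real.tendsto_exp_atBot.comp (tendsto_neg_atBot_iff.mpr
        (tendsto_natCast_atTop_atTop.atTop_mul_const hτ))
    have h2 := (Complex.continuous_ofReal.tendsto 0).comp h1
    simp only [Function.comp_def] at h2
    refine Tendsto.congr (fun N => ?_) (by simpa using h2)
    norm_num
  have T4 : Tendsto (fun N : ℕ => G ((N:ℤ)+1)) atTop (nhds 0) := by
    have hiden : ∀ N : ℕ, G ((N:ℤ)+1) = ((Real.exp (-(((N:ℝ)+1)*τ)) : ℝ) : ℂ) /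
        ((c:ℂ) - (ξ:ℂ) * ((Real.exp (-(((N:ℝ)+1)*τ)) : ℝ) : ℂ)) := by
      intro N
      set v : ℂ := ((Real.exp (-(((N:ℝ)+1)*τ)) : ℝ) : ℂ) with hvdef
      have hv0 : v ≠ 0 := by
        rw [hvdef]
        exact_mod_cast (Real.exp_pos _).ne'
      have hmul : v * (Real.exp ((((N:ℤ)+1 : ℤ) : ℝ) * τ) : ℂ) = 1 := by
        rw [hvdef, ← Complex.ofReal_mul, ← Real.exp_add]
        rw [show -(((N:ℝ)+1)*τ) + (((N:ℤ)+1 : ℤ) : ℝ) * τ = 0 by push_cast; ring]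
        simp
      have hD2 : (c:ℂ) - (ξ:ℂ) * v
          = v * ((Real.exp ((((N:ℤ)+1 : ℤ) : ℝ) * τ) : ℂ) * (c:ℂ) - (ξ:ℂ)) := by
        linear_combination (-(c:ℂ)) * hmul
      rw [hGdef]
      simp only
      rw [hD2, div_eq_div_iff (hEc ((N:ℤ)+1)) (mul_ne_zero hv0 (hEc ((N:ℤ)+1)))]
      ring
    have hden : Tendsto (fun N : ℕ => (c:ℂ) - (ξ:ℂ) * ((Real.exp (-(((N:ℝ)+1)*τ)) : ℝ) : ℂ))
        atTop (nhds ((c:ℂ) - (ξ:ℂ) * 0)) :=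
      tendsto_const_nhds.sub (tendsto_const_nhds.mul hv)
    have hc' : (c:ℂ) - (ξ:ℂ) * 0 ≠ 0 := by
      simpa using Complex.ofReal_ne_zero.mpr hc
    have := hv.div hden hc'
    rw [zero_div] at this
    exact Tendsto.congr (fun N => (hiden N).symm) this
  have T5 : Tendsto (fun N : ℕ => G (-(N:ℤ))) atTop (nhds (-(1/(ξ:ℂ)))) := by
    have hden : Tendsto (fun N : ℕ =>
        ((Real.exp (((-(N:ℤ)) : ℝ)*τ) : ℝ) : ℂ) * (c:ℂ) - (ξ:ℂ))
        atTop (nhds ((0:ℂ) * (c:ℂ) - (ξ:ℂ))) :=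
      (hw.mul_const _).sub tendsto_const_nhds
    have hne : (0:ℂ) * (c:ℂ) - (ξ:ℂ) ≠ 0 := by
      simpa using Complex.ofReal_ne_zero.mpr hξ
    have := (tendsto_const_nhds (x := (1:ℂ))).div hden hne
    have hval : (1:ℂ) / ((0:ℂ) * (c:ℂ) - (ξ:ℂ)) = -(1/(ξ:ℂ)) := by
      rw [zero_mul, zero_sub, one_div, one_div, inv_neg]
    rw [hval] at this
    refine Tendsto.congr (fun N => ?_) this
    rw [hGdef]
    simp only [Pi.div_apply]
    push_cast
    ring
  -- combine
  have TT := (hS1.add (T2.sub T3)).add (T4.sub T5)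
  have hval : (L + ((0:ℂ) - 0)) + ((0:ℂ) - -(1/(ξ:ℂ))) = L + 1/(ξ:ℂ) := by ring
  rw [hval] at TT
  exact Tendsto.congr (fun N => (key N).symm) TT
end

section
/- Let Γ, Λ, c be as follows: Γ a group of Möbius transformations preserving ℍ, Λ ⊂ ℝ a closed set avoiding ∞ such that ∑_{φ∈Γ}|φ'(z)| converges locally uniformly off Λ, and c ∈ ℝ \ Λ. Define Υ(z) = ∑_{φ ∈ Γ} [1/φ(z) − 1/φ(c)]. Then for every ρ ∈ Γ and every z where all terms are defined: Υ(ρ(z)) = Υ(z) + K(ρ), where K(ρ) = ∑_{φ ∈ Γ} [1/φ(ρ(c)) − 1/φ(c)]. Moreover K : Γ → ℝ is a group homomorphism into (ℝ, +): K(ρ₁ ∘ ρ₂) = K(ρ₁) + K(ρ₂). -/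
open Complex Filter

private lemma moebius_hasDerivAt (a b c d : ℝ) (x : ℂ) (hden : (c:ℂ)*x + d ≠ 0) :
    HasDerivAt (fun z : ℂ => ((a:ℂ)*z + b)/((c:ℂ)*z + d))
      (((a:ℂ)*d - (b:ℂ)*c)/((c:ℂ)*x + d)^2) x := by
  have h1 : HasDerivAt (fun z : ℂ => (a:ℂ)*z + b) (a:ℂ) x := by
    simpa using ((hasDerivAt_id x).const_mul (a:ℂ)).add_const (b:ℂ)
  have h2 : HasDerivAt (fun z : ℂ => (c:ℂ)*z + d) (c:ℂ) x := by
    simpa using ((hasDerivAt_id x).const_mul (c:ℂ)).add_const (d:ℂ)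
  have h3 := h1.div h2 hden
  exact h3.congr_deriv (by ring)

/-- with Γ, Λ, c as in the locally uniformly summable setting, the
function Υ(z) = ∑_{φ∈Γ}[1/φ(z) − 1/φ(c)] satisfies Υ(ρ(z)) = Υ(z) + K(ρ) with
K(ρ) = ∑_{φ∈Γ}[1/φ(ρ(c)) − 1/φ(c)], K is real-valued, and K is additive:
K(ρ₁∘ρ₂) = K(ρ₁) + K(ρ₂). -/
theorem upsilon_automorphy_and_K_additive {G : Type*} [Group G]
    (act : G →* Function.End ℂ)
    (hmoeb : ∀ g : G, ∃ a b c d : ℝ, a * d - b * c ≠ 0 ∧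
      (∀ z : ℂ, 0 < z.im → 0 < (act g z).im) ∧
      ∀ z : ℂ, act g z = ((a : ℂ) * z + b) / ((c : ℂ) * z + d))
    (Λ : Set ℂ) (hΛclosed : IsClosed Λ) (hΛreal : Λ ⊆ Set.range (Complex.ofReal))
    (hΛinv : ∀ g : G, ∀ x : ℂ, x ∉ Λ → act g x ∉ Λ)
    (S : ℂ → ℝ)
    (hloc : TendstoLocallyUniformlyOn
      (fun (s : Finset G) (x : ℂ) => ∑ g ∈ s, ‖deriv (act g : ℂ → ℂ) x‖)
      S atTop Λᶜ)
    (c : ℝ) (hc : (c : ℂ) ∉ Λ)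
    (hcz : ∀ g g' : G, act g (act g' (c : ℂ)) ≠ 0)
    (K : G → ℂ)
    (hK : ∀ ρ : G, K ρ = ∑' g : G, (1 / act g (act ρ (c : ℂ)) - 1 / act g (c : ℂ))) :
    (∀ ρ : G, ∀ z : ℂ, z ∉ Λ → (∀ g : G, act g z ≠ 0) →
      (∀ g : G, act g (act ρ z) ≠ 0) →
      (∑' g : G, (1 / act g (act ρ z) - 1 / act g (c : ℂ))) =
        (∑' g : G, (1 / act g z - 1 / act g (c : ℂ))) + K ρ) ∧
    (∀ ρ : G, (K ρ).im = 0) ∧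
    (∀ ρ₁ ρ₂ : G, K (ρ₁ * ρ₂) = K ρ₁ + K ρ₂) := by
  classical
  -- basic facts about the action
  have hact_mul : ∀ (g h : G) (x : ℂ), act (g*h) x = act g (act h x) := by
    intro g h x; rw [map_mul]; rfl
  have hact_one : ∀ x : ℂ, act 1 x = x := by
    intro x; rw [map_one]; rfl
  have hinj : ∀ g : G, Function.Injective (act g : ℂ → ℂ) := by
    intro g x y hxy
    have h2 : act g⁻¹ (act g x) = act g⁻¹ (act g y) := by rw [hxy]
    rwa [← hact_mul, ← hact_mul, inv_mul_cancel, hact_one, hact_one] at h2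
  have hmem : ∀ (g : G) (x : ℂ), x ∈ Λ → act g x ∈ Λ := by
    intro g x hx
    by_contra h
    have h2 := hΛinv g⁻¹ _ h
    rw [← hact_mul, inv_mul_cancel, hact_one] at h2
    exact h2 hx
  choose ca cb cc2 cd hco using hmoeb
  have hdet : ∀ g, ca g * cd g - cb g * cc2 g ≠ 0 := fun g => (hco g).1
  have hform : ∀ (g : G) (z : ℂ),
      act g z = ((ca g : ℂ)*z + cb g)/((cc2 g : ℂ)*z + cd g) := fun g => (hco g).2.2
  have hdetC : ∀ g : G, (ca g : ℂ)*(cd g) - (cb g)*(cc2 g) ≠ 0 := by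
    intro g h
    exact hdet g (by exact_mod_cast h)
  have gc : ∀ g : G, act g (c:ℂ) ≠ 0 := by
    intro g; have h := hcz g 1; rwa [hact_one] at h
  have hden : ∀ (g : G) (x : ℂ), act g x ≠ 0 → (cc2 g : ℂ)*x + cd g ≠ 0 := by
    intro g x hx h0
    exact hx (by rw [hform, h0, div_zero])
  have hnum : ∀ (g : G) (x : ℂ), act g x ≠ 0 → (ca g : ℂ)*x + cb g ≠ 0 := by
    intro g x hx h0
    exact hx (by rw [hform, h0, zero_div])
  have hu_eq : ∀ g : G, ca g ≠ 0 → act g⁻¹ 0 = -(cb g : ℂ)/(ca g) := by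
    intro g ha
    have haC : (ca g : ℂ) ≠ 0 := by exact_mod_cast ha
    apply hinj g
    rw [← hact_mul, mul_inv_cancel, hact_one, hform]
    have hnum0 : (ca g : ℂ) * (-(cb g : ℂ)/(ca g)) + cb g = 0 := by
      field_simp
      ring
    rw [hnum0, zero_div]
  -- reindexing
  have reindex_eq : ∀ (ρ : G) (w w' : ℂ),
      (fun g : G => 1/act g (act ρ w) - 1/act g (act ρ w'))
        = (fun g : G => 1/act g w - 1/act g w') ∘ (Equiv.mulRight ρ) := by
    intro ρ w w'; funext g
    simp only [Function.comp_apply, Equiv.coe_mulRight]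
    rw [← hact_mul g ρ w, ← hact_mul g ρ w']
  have reindex_tsum : ∀ (ρ : G) (w w' : ℂ),
      ∑' g : G, (1/act g (act ρ w) - 1/act g (act ρ w'))
        = ∑' g : G, (1/act g w - 1/act g w') := by
    intro ρ w w'
    rw [reindex_eq ρ w w']
    exact (Equiv.mulRight ρ).tsum_eq (fun g : G => 1/act g w - 1/act g w')
  have reindex_summable : ∀ (ρ : G) (w w' : ℂ),
      Summable (fun g : G => 1/act g (act ρ w) - 1/act g (act ρ w'))
        ↔ Summable (fun g : G => 1/act g w - 1/act g w') := by
    intro ρ w w'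
    rw [reindex_eq ρ w w']
    exact (Equiv.mulRight ρ).summable_iff
  -- transfer of summability between base points
  have summ_iff : ∀ w z : ℂ, w ∉ Λ → (∀ g : G, act g w ≠ 0) → (∀ g : G, act g z ≠ 0) →
      z ≠ (c:ℂ) →
      Summable (fun g : G => 1/act g z - 1/act g (c:ℂ)) →
      Summable (fun g : G => 1/act g w - 1/act g (c:ℂ)) := by
    intro w z hwΛ gw gz hzc hsz
    have hw0 : w ≠ 0 := by have h := gw 1; rwa [hact_one] at h
    have hzc' : (0:ℝ) < ‖z - (c:ℂ)‖ := by
      rw [norm_pos_iff]; exact sub_ne_zero.mpr hzc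
    -- Step A : a radius δ and a finite bad set
    obtain ⟨δ, hδpos, Fbad, hFfin, hgood⟩ :
        ∃ δ : ℝ, 0 < δ ∧ ∃ Fbad : Set G, Fbad.Finite ∧
          ∀ g : G, g ∉ Fbad → ca g ≠ 0 → act g⁻¹ 0 ∉ Metric.ball w δ := by
      by_cases h0 : (0:ℂ) ∈ Λ
      · obtain ⟨δ, hδpos, hball⟩ := Metric.isOpen_iff.mp hΛclosed.isOpen_compl w hwΛ
        refine ⟨δ, hδpos, ∅, Set.finite_empty, fun g _ _ hmem' => ?_⟩
        exact (hball hmem') (hmem g⁻¹ 0 h0)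
      · -- uniform bound near w
        obtain ⟨t, ht, hev⟩ :=
          (Metric.tendstoLocallyUniformlyOn_iff.mp hloc) (1/2) (by norm_num) w hwΛ
        rw [hΛclosed.isOpen_compl.nhdsWithin_eq hwΛ] at ht
        obtain ⟨δ₁, hδ₁, hball₁⟩ := Metric.mem_nhds_iff.mp ht
        obtain ⟨F, hF⟩ := Filter.eventually_atTop.mp hev
        have hbound : ∀ g ∉ F, ∀ x ∈ Metric.ball w δ₁, ‖deriv (act g : ℂ → ℂ) x‖ ≤ 1 := by
          intro g hgF x hx
          have h1 := hF F le_rfl x (hball₁ hx)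
          have h2 := hF (insert g F) (F.subset_insert g) x (hball₁ hx)
          rw [Finset.sum_insert hgF] at h2
          rw [Real.dist_eq] at h1 h2
          have a1 := abs_lt.mp h1
          have a2 := abs_lt.mp h2
          linarith [a1.1, a1.2, a2.1, a2.2]
        have hsum0 : Summable (fun g : G => ‖deriv (act g : ℂ → ℂ) 0‖) :=
          ⟨S 0, hloc.tendsto_at (by exact h0 : (0:ℂ) ∈ Λᶜ)⟩
        have hTfin : {h : G | ¬ ‖deriv (act h : ℂ → ℂ) 0‖ < 1}.Finite :=
          Filter.eventually_cofinite.mp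
            (hsum0.tendsto_cofinite_zero.eventually_lt_const one_pos)
        refine ⟨min δ₁ ‖w‖, lt_min hδ₁ (norm_pos_iff.mpr hw0),
          ↑F ∪ ((fun h : G => h⁻¹) '' {h : G | ¬ ‖deriv (act h : ℂ → ℂ) 0‖ < 1}),
          (F.finite_toSet.union (hTfin.image _)), ?_⟩
        intro g hgbad ha hu
        have hgF : g ∉ F := fun h => hgbad (Set.mem_union_left _ h)
        have hgT : ‖deriv (act g⁻¹ : ℂ → ℂ) 0‖ < 1 := by
          by_contra h
          exact hgbad (Set.mem_union_right _ ⟨g⁻¹, h, inv_inv g⟩)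
        have hu0 : act g⁻¹ 0 ≠ 0 := by
          intro h
          rw [h] at hu
          have h2 := Metric.mem_ball.mp hu
          rw [dist_zero_left] at h2
          have := min_le_right δ₁ ‖w‖
          linarith
        -- act g⁻¹ is differentiable at 0
        have hd' : (cc2 g⁻¹ : ℂ)*0 + cd g⁻¹ ≠ 0 := by
          intro h
          exact hu0 (by rw [hform, h, div_zero])
        have H2 := moebius_hasDerivAt (ca g⁻¹) (cb g⁻¹) (cc2 g⁻¹) (cd g⁻¹) 0 hd'
        have hfun' : (act g⁻¹ : ℂ → ℂ)
            = fun z : ℂ => ((ca g⁻¹ : ℂ)*z + cb g⁻¹)/((cc2 g⁻¹ : ℂ)*z + cd g⁻¹) :=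
          funext (hform g⁻¹)
        rw [← hfun'] at H2
        -- act g is differentiable at u := act g⁻¹ 0
        have haC : (ca g : ℂ) ≠ 0 := by exact_mod_cast ha
        have huval := hu_eq g ha
        have hduC : (cc2 g : ℂ)*(act g⁻¹ 0) + cd g ≠ 0 := by
          rw [huval]
          have hrewr : (cc2 g : ℂ)*(-(cb g : ℂ)/(ca g)) + cd g
              = ((ca g : ℂ)*(cd g) - (cb g)*(cc2 g))/(ca g) := by
            field_simp
            ring
          rw [hrewr]
          exact div_ne_zero (hdetC g) haC
        have H1 := moebius_hasDerivAt (ca g) (cb g) (cc2 g) (cd g) (act g⁻¹ 0) hduC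
        have hfun : (act g : ℂ → ℂ)
            = fun z : ℂ => ((ca g : ℂ)*z + cb g)/((cc2 g : ℂ)*z + cd g) :=
          funext (hform g)
        rw [← hfun] at H1
        -- chain rule
        have hcomp := H1.comp 0 H2
        have hid : (act g : ℂ → ℂ) ∘ (act g⁻¹ : ℂ → ℂ) = id := by
          funext x
          simp only [Function.comp_apply, id_eq]
          show act g (act g⁻¹ x) = x
          rw [← hact_mul, mul_inv_cancel, hact_one]
        rw [hid] at hcomp
        set D1v := (((ca g : ℂ)*(cd g) - (cb g)*(cc2 g))/((cc2 g : ℂ)*(act g⁻¹ 0) + cd g)^2) with hD1v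
        set D2v := (((ca g⁻¹ : ℂ)*(cd g⁻¹) - (cb g⁻¹)*(cc2 g⁻¹))/((cc2 g⁻¹ : ℂ)*0 + cd g⁻¹)^2) with hD2v
        have hD : D1v * D2v = 1 := hcomp.unique (hasDerivAt_id 0)
        have hD1 : ‖D1v‖ ≤ 1 := by
          have hmono : act g⁻¹ 0 ∈ Metric.ball w δ₁ :=
            Metric.ball_subset_ball (min_le_left δ₁ ‖w‖) hu
          have h2 := hbound g hgF _ hmono
          rwa [H1.deriv] at h2
        have hD2 : ‖D2v‖ < 1 := by
          rwa [H2.deriv] at hgT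
        have h5 : ‖D1v‖ * ‖D2v‖ < 1 := by
          nlinarith [norm_nonneg D1v, norm_nonneg D2v]
        have h6 : ‖D1v‖ * ‖D2v‖ = 1 := by
          rw [← norm_mul, hD, norm_one]
        linarith
    -- Step B : termwise comparison
    set Cst : ℝ := (‖w - (c:ℂ)‖ * (δ + ‖z - w‖)) / (‖z - (c:ℂ)‖ * δ) with hCst
    have hcomp : ∀ g : G, g ∉ Fbad →
        ‖1/act g w - 1/act g (c:ℂ)‖ ≤ Cst * ‖1/act g z - 1/act g (c:ℂ)‖ := by
      intro g hg
      have hdw : (cc2 g : ℂ)*w + cd g ≠ 0 := hden g w (gw g)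
      have hdz : (cc2 g : ℂ)*z + cd g ≠ 0 := hden g z (gz g)
      have hdc : (cc2 g : ℂ)*(c:ℂ) + cd g ≠ 0 := hden g _ (gc g)
      have hnw : (ca g : ℂ)*w + cb g ≠ 0 := hnum g w (gw g)
      have hnz : (ca g : ℂ)*z + cb g ≠ 0 := hnum g z (gz g)
      have hnc : (ca g : ℂ)*(c:ℂ) + cb g ≠ 0 := hnum g _ (gc g)
      rcases eq_or_ne (ca g) 0 with ha | ha
      · -- affine-inverse type : ratio is (w-c)/(z-c)
        have haC0 : (ca g : ℂ) = 0 := by exact_mod_cast ha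
        have hbC : (cb g : ℂ) ≠ 0 := by
          rw [haC0, zero_mul, zero_add] at hnw
          exact hnw
        have key : (1/act g w - 1/act g (c:ℂ)) * (z - (c:ℂ))
            = (1/act g z - 1/act g (c:ℂ)) * (w - (c:ℂ)) := by
          rw [hform g w, hform g z, hform g (c:ℂ), haC0]
          simp only [zero_mul, zero_add]
          rw [one_div_div, one_div_div, one_div_div]
          field_simp
          ring
        have hnorm : ‖1/act g w - 1/act g (c:ℂ)‖ * ‖z - (c:ℂ)‖
            = ‖1/act g z - 1/act g (c:ℂ)‖ * ‖w - (c:ℂ)‖ := by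
          rw [← norm_mul, ← norm_mul, key]
        rw [hCst, div_mul_eq_mul_div, le_div_iff₀ (by positivity)]
        have e1 : ‖1/act g w - 1/act g (c:ℂ)‖ * ‖z - (c:ℂ)‖ * δ
            ≤ ‖1/act g z - 1/act g (c:ℂ)‖ * ‖w - (c:ℂ)‖ * δ :=
          mul_le_mul_of_nonneg_right hnorm.le hδpos.le
        have e2 : (0:ℝ) ≤ ‖1/act g z - 1/act g (c:ℂ)‖ * (‖w - (c:ℂ)‖ * ‖z - w‖) := by
          positivity
        linarith [e1, e2]
      · -- generic type
        have haC : (ca g : ℂ) ≠ 0 := by exact_mod_cast ha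
        have huval := hu_eq g ha
        have hball := hgood g hg ha
        have hwu : δ ≤ ‖w - act g⁻¹ 0‖ := by
          have h2 : ¬ dist (act g⁻¹ 0) w < δ := fun h => hball (Metric.mem_ball.mpr h)
          rw [dist_eq_norm, ← norm_neg] at h2
          simp only [neg_sub] at h2
          linarith [not_lt.mp h2]
        have hq : (0:ℝ) < ‖w - act g⁻¹ 0‖ := lt_of_lt_of_le hδpos hwu
        have key : (1/act g w - 1/act g (c:ℂ)) * ((z - (c:ℂ)) * (w - act g⁻¹ 0))
            = (1/act g z - 1/act g (c:ℂ)) * ((w - (c:ℂ)) * (z - act g⁻¹ 0)) := by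
          rw [hform g w, hform g z, hform g (c:ℂ), huval]
          field_simp
          ring
        have hnorm : ‖1/act g w - 1/act g (c:ℂ)‖ * (‖z - (c:ℂ)‖ * ‖w - act g⁻¹ 0‖)
            = ‖1/act g z - 1/act g (c:ℂ)‖ * (‖w - (c:ℂ)‖ * ‖z - act g⁻¹ 0‖) := by
          rw [← norm_mul, ← norm_mul, ← norm_mul, ← norm_mul, key]
        have hzu : ‖z - act g⁻¹ 0‖ ≤ ‖z - w‖ + ‖w - act g⁻¹ 0‖ := by
          calc ‖z - act g⁻¹ 0‖ = ‖(z - w) + (w - act g⁻¹ 0)‖ := by ring_nf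
            _ ≤ ‖z - w‖ + ‖w - act g⁻¹ 0‖ := norm_add_le _ _
        rw [hCst, div_mul_eq_mul_div, le_div_iff₀ (by positivity)]
        -- goal : ‖Dw‖ * (‖z-c‖*δ) ≤ ‖w-c‖*(δ+‖z-w‖) * ‖Dz‖
        have i1 : ‖z - act g⁻¹ 0‖ * δ ≤ (‖z - w‖ + ‖w - act g⁻¹ 0‖) * δ :=
          mul_le_mul_of_nonneg_right hzu hδpos.le
        have i2 : ‖z - w‖ * δ ≤ ‖z - w‖ * ‖w - act g⁻¹ 0‖ :=
          mul_le_mul_of_nonneg_left hwu (norm_nonneg _)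
        have e2 : ‖z - act g⁻¹ 0‖ * δ ≤ ‖z - w‖ * ‖w - act g⁻¹ 0‖ + ‖w - act g⁻¹ 0‖ * δ := by
          linarith
        have hBr : (0:ℝ) ≤ ‖1/act g z - 1/act g (c:ℂ)‖ * ‖w - (c:ℂ)‖ := by positivity
        have hmain : ‖1/act g w - 1/act g (c:ℂ)‖ * (‖z - (c:ℂ)‖ * δ) * ‖w - act g⁻¹ 0‖
            ≤ ‖w - (c:ℂ)‖ * (δ + ‖z - w‖) * ‖1/act g z - 1/act g (c:ℂ)‖ * ‖w - act g⁻¹ 0‖ := by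
          have e3 : ‖1/act g w - 1/act g (c:ℂ)‖ * (‖z - (c:ℂ)‖ * δ) * ‖w - act g⁻¹ 0‖
              = (‖1/act g w - 1/act g (c:ℂ)‖ * (‖z - (c:ℂ)‖ * ‖w - act g⁻¹ 0‖)) * δ := by ring
          have e4 := hnorm
          calc ‖1/act g w - 1/act g (c:ℂ)‖ * (‖z - (c:ℂ)‖ * δ) * ‖w - act g⁻¹ 0‖
              = (‖1/act g w - 1/act g (c:ℂ)‖ * (‖z - (c:ℂ)‖ * ‖w - act g⁻¹ 0‖)) * δ := by ring
            _ = (‖1/act g z - 1/act g (c:ℂ)‖ * (‖w - (c:ℂ)‖ * ‖z - act g⁻¹ 0‖)) * δ := by rw [e4]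
            _ = (‖1/act g z - 1/act g (c:ℂ)‖ * ‖w - (c:ℂ)‖) * (‖z - act g⁻¹ 0‖ * δ) := by ring
            _ ≤ (‖1/act g z - 1/act g (c:ℂ)‖ * ‖w - (c:ℂ)‖)
                  * (‖z - w‖ * ‖w - act g⁻¹ 0‖ + ‖w - act g⁻¹ 0‖ * δ) :=
                mul_le_mul_of_nonneg_left e2 hBr
            _ = ‖w - (c:ℂ)‖ * (δ + ‖z - w‖) * ‖1/act g z - 1/act g (c:ℂ)‖ * ‖w - act g⁻¹ 0‖ := by
                ring
        exact le_of_mul_le_mul_right hmain hq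
    -- conclude
    refine Summable.of_norm_bounded_eventually
      (g := fun g : G => Cst * ‖1/act g z - 1/act g (c:ℂ)‖)
      ((summable_norm_iff.mpr hsz).mul_left Cst) ?_
    rw [Filter.eventually_cofinite]
    apply hFfin.subset
    intro g hg
    by_contra hgF
    exact hg (hcomp g hgF)
  -- main automorphy statement
  have main1 : ∀ ρ : G, ∀ z : ℂ, z ∉ Λ → (∀ g : G, act g z ≠ 0) →
      (∀ g : G, act g (act ρ z) ≠ 0) →
      (∑' g : G, (1 / act g (act ρ z) - 1 / act g (c : ℂ))) =
        (∑' g : G, (1 / act g z - 1 / act g (c : ℂ))) + K ρ := by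
    intro ρ z hz gz gρz
    have gρc : ∀ g : G, act g (act ρ (c:ℂ)) ≠ 0 := fun g => hcz g ρ
    have hρzΛ : act ρ z ∉ Λ := hΛinv ρ z hz
    have hρcΛ : act ρ (c:ℂ) ∉ Λ := hΛinv ρ _ hc
    rcases eq_or_ne z (c:ℂ) with rfl | hzc
    · rw [hK ρ]
      simp
    rcases eq_or_ne (act ρ (c:ℂ)) (c:ℂ) with hρc | hρcne
    · have hK0 : K ρ = 0 := by rw [hK ρ, hρc]; simp
      rw [hK0, add_zero]
      have h2 := reindex_tsum ρ z (c:ℂ)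
      rw [hρc] at h2
      exact h2
    rcases eq_or_ne (act ρ z) (c:ℂ) with hρz | hρzne
    · rw [hρz]
      have h1 : ∑' _g : G, (1/act _g (c:ℂ) - 1/act _g (c:ℂ)) = 0 := by simp
      rw [h1]
      have hz_eq : z = act ρ⁻¹ (c:ℂ) := by
        rw [← hρz, ← hact_mul, inv_mul_cancel, hact_one]
      have h3 := reindex_tsum ρ (act ρ⁻¹ (c:ℂ)) (c:ℂ)
      rw [← hact_mul, mul_inv_cancel, hact_one, ← hz_eq] at h3
      have h2 : ∑' g : G, (1/act g z - 1/act g (c:ℂ)) = - K ρ := by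
        rw [hK ρ, ← tsum_neg, ← h3]
        apply tsum_congr
        intro g
        ring
      rw [h2]
      ring
    · -- generic case
      by_cases hE : Summable (fun g : G => 1/act g (act ρ (c:ℂ)) - 1/act g (c:ℂ))
      · have hDz : Summable (fun g : G => 1/act g z - 1/act g (c:ℂ)) :=
          summ_iff z (act ρ (c:ℂ)) hz gz gρc hρcne hE
        have hB : Summable (fun g : G => 1/act g (act ρ z) - 1/act g (act ρ (c:ℂ))) :=
          (reindex_summable ρ z (c:ℂ)).mpr hDz
        calc ∑' g : G, (1/act g (act ρ z) - 1/act g (c:ℂ))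
            = ∑' g : G, ((1/act g (act ρ z) - 1/act g (act ρ (c:ℂ)))
                + (1/act g (act ρ (c:ℂ)) - 1/act g (c:ℂ))) := by
              apply tsum_congr; intro g; ring
          _ = (∑' g : G, (1/act g (act ρ z) - 1/act g (act ρ (c:ℂ))))
                + ∑' g : G, (1/act g (act ρ (c:ℂ)) - 1/act g (c:ℂ)) := Summable.tsum_add hB hE
          _ = (∑' g : G, (1/act g z - 1/act g (c:ℂ))) + K ρ := by
              rw [reindex_tsum ρ z (c:ℂ), hK ρ]
      · have hDz : ¬ Summable (fun g : G => 1/act g z - 1/act g (c:ℂ)) := fun h =>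
          hE (summ_iff (act ρ (c:ℂ)) z hρcΛ gρc gz hzc h)
        have hDρz : ¬ Summable (fun g : G => 1/act g (act ρ z) - 1/act g (c:ℂ)) := fun h =>
          hE (summ_iff (act ρ (c:ℂ)) (act ρ z) hρcΛ gρc gρz hρzne h)
        rw [tsum_eq_zero_of_not_summable hDρz, tsum_eq_zero_of_not_summable hDz,
          hK ρ, tsum_eq_zero_of_not_summable hE, add_zero]
  refine ⟨main1, ?_, ?_⟩
  · -- K is real
    intro ρ
    have hreal : ∀ (g : G) (r : ℝ), ∃ r' : ℝ, act g (r:ℂ) = (r' : ℂ) := by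
      intro g r
      refine ⟨(ca g * r + cb g)/(cc2 g * r + cd g), ?_⟩
      rw [hform]
      push_cast
      ring
    rw [hK ρ]
    have hreal2 : ∀ g : G, ∃ r : ℝ, (1/act g (act ρ (c:ℂ)) - 1/act g (c:ℂ)) = (r:ℂ) := by
      intro g
      obtain ⟨r₁, h₁⟩ := hreal ρ c
      obtain ⟨r₂, h₂⟩ := hreal g r₁
      obtain ⟨r₃, h₃⟩ := hreal g c
      refine ⟨1/r₂ - 1/r₃, ?_⟩
      rw [h₁, h₂, h₃]
      push_cast
      ring
    by_cases h : Summable (fun g : G => 1/act g (act ρ (c:ℂ)) - 1/act g (c:ℂ))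
    · rw [← Complex.imCLM_apply, ContinuousLinearMap.map_tsum _ h]
      have h2 : ∀ g : G, Complex.imCLM (1/act g (act ρ (c:ℂ)) - 1/act g (c:ℂ)) = 0 := by
        intro g
        obtain ⟨r, hr⟩ := hreal2 g
        rw [hr]
        simp
      rw [tsum_congr h2, tsum_zero]
    · rw [tsum_eq_zero_of_not_summable h]
      simp
  · -- K is additive
    intro ρ₁ ρ₂
    have g2 : ∀ g : G, act g (act ρ₁ (act ρ₂ (c:ℂ))) ≠ 0 := by
      intro g
      rw [← hact_mul ρ₁ ρ₂]
      exact hcz g (ρ₁*ρ₂)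
    have h := main1 ρ₁ (act ρ₂ (c:ℂ)) (hΛinv ρ₂ _ hc) (fun g => hcz g ρ₂) g2
    rw [hK (ρ₁*ρ₂)]
    have e1 : ∑' g : G, (1/act g (act (ρ₁*ρ₂) (c:ℂ)) - 1/act g (c:ℂ))
        = ∑' g : G, (1/act g (act ρ₁ (act ρ₂ (c:ℂ))) - 1/act g (c:ℂ)) := by
      apply tsum_congr
      intro g
      rw [hact_mul ρ₁ ρ₂]
    rw [e1, h, ← hK ρ₂]
    ring
end

section
/- Let g : [0,T] × D → ℂ be a flow on a domain D ⊂ ℂ solving ∂g_t(z)/∂t = −P(g_t(z), t) with g_0(z) = z, where P(·,t) is holomorphic on a domain containing all trajectories and (z,t) ↦ P(z,t) is continuous. Write P(ζ,t) − P(ω,t) = (ζ − ω)·Ψ_t(ζ,ω) with Ψ_t continuous. Then for any two points z, w ∈ D whose solutions exist on [0,t], g_t(z) − g_t(w) = (z − w)·exp(−∫₀ᵗ Ψ_s(g_s(z), g_s(w)) ds). In particular, if z ≠ w then g_t(z) ≠ g_t(w), i.e. the flow map g_t is injective on its domain of existence. -/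
open Complex Filter

/-- for the Loewner flow ġ_t(z) = −P(g_t(z),t), g_0(z) = z, writing
P(ζ,t) − P(ω,t) = (ζ−ω)Ψ_t(ζ,ω) with Ψ continuous, one has
g_t(z) − g_t(w) = (z−w)·exp(−∫₀ᵗ Ψ_s(g_s(z),g_s(w)) ds); in particular the flow
map g_t is injective. -/
theorem loewner_flow_injective (T : ℝ) (D : Set ℂ) (P : ℂ → ℝ → ℂ)
    (hPcont : Continuous fun p : ℂ × ℝ => P p.1 p.2)
    (hPhol : ∀ t : ℝ, Differentiable ℂ (fun ζ => P ζ t))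
    (Ψ : ℝ → ℂ → ℂ → ℂ)
    (hΨcont : Continuous fun p : ℝ × ℂ × ℂ => Ψ p.1 p.2.1 p.2.2)
    (hΨ : ∀ (t : ℝ) (ζ ω : ℂ), P ζ t - P ω t = (ζ - ω) * Ψ t ζ ω)
    (g : ℝ → ℂ → ℂ) (t : ℝ) (ht : t ∈ Set.Icc 0 T)
    (z w : ℂ) (hzD : z ∈ D) (hwD : w ∈ D)
    (hg0 : ∀ u ∈ D, g 0 u = u)
    (hode : ∀ u ∈ ({z, w} : Set ℂ), ∀ s ∈ Set.Icc 0 t,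
      HasDerivAt (fun v => g v u) (-(P (g s u) s)) s) :
    g t z - g t w =
      (z - w) * Complex.exp (-(∫ s in (0 : ℝ)..t, Ψ s (g s z) (g s w))) ∧
    (z ≠ w → g t z ≠ g t w) := by
  have htT : 0 ≤ t := ht.1
  have hodez := hode z (by simp)
  have hodew := hode w (by simp)
  -- continuity of the flow on [0,t]
  have hcz : ContinuousOn (fun v => g v z) (Set.Icc 0 t) := fun s hs =>
    (hodez s hs).continuousAt.continuousWithinAt
  have hcw : ContinuousOn (fun v => g v w) (Set.Icc 0 t) := fun s hs =>
    (hodew s hs).continuousAt.continuousWithinAt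
  -- projection onto [0,t]
  set π : ℝ → ℝ := fun s => min (max s 0) t with hπdef
  have hπcont : Continuous π := (continuous_id.max continuous_const).min continuous_const
  have hπmem : ∀ s, π s ∈ Set.Icc 0 t := fun s =>
    ⟨le_min (le_max_right _ _) htT, min_le_right _ _⟩
  have hπeq : ∀ s ∈ Set.Icc 0 t, π s = s := fun s hs => by
    simp [hπdef, max_eq_left hs.1, min_eq_left hs.2]
  set f : ℝ → ℂ := fun s => Ψ s (g (π s) z) (g (π s) w) with hfdef
  have hfc : Continuous f := by
    have h1 : Continuous fun s => g (π s) z := hcz.comp_continuous hπcont hπmem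
    have h2 : Continuous fun s => g (π s) w := hcw.comp_continuous hπcont hπmem
    exact hΨcont.comp (continuous_id.prodMk (h1.prodMk h2))
  have hfeq : ∀ s ∈ Set.Icc 0 t, f s = Ψ s (g s z) (g s w) := fun s hs => by
    simp [hfdef, hπeq s hs]
  set I : ℝ → ℂ := fun s => ∫ u in (0:ℝ)..s, f u with hIdef
  have hI : ∀ s : ℝ, HasDerivAt I (f s) s := fun s =>
    intervalIntegral.integral_hasDerivAt_right (hfc.intervalIntegrable _ _)
      (hfc.stronglyMeasurable.stronglyMeasurableAtFilter) hfc.continuousAt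
  set h : ℝ → ℂ := fun s => (g s z - g s w) * Complex.exp (I s) with hhdef
  have hderiv : ∀ s ∈ Set.Icc 0 t, HasDerivAt h 0 s := by
    intro s hs
    have hΔ : HasDerivAt (fun v => g v z - g v w)
        (-(P (g s z) s) - -(P (g s w) s)) s := (hodez s hs).sub (hodew s hs)
    have hE : HasDerivAt (fun v => Complex.exp (I v)) (Complex.exp (I s) * f s) s :=
      (hI s).cexp
    have := hΔ.mul hE
    refine HasDerivAt.congr_deriv this ?_
    rw [hfeq s hs]
    have hP := hΨ s (g s z) (g s w)
    rw [show -(P (g s z) s) - -(P (g s w) s) = -(P (g s z) s - P (g s w) s) by ring, hP]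
    ring
  have hconst : h t = h 0 := by
    have := constant_of_has_deriv_right_zero (f := h) (a := 0) (b := t)
      (fun x hx => (hderiv x hx).continuousAt.continuousWithinAt)
      (fun x hx => (hderiv x ⟨hx.1, hx.2.le⟩).hasDerivWithinAt)
    exact this t ⟨htT, le_rfl⟩
  have h0 : h 0 = z - w := by
    simp [hhdef, hIdef, hg0 z hzD, hg0 w hwD]
  have hIt : I t = ∫ s in (0:ℝ)..t, Ψ s (g s z) (g s w) := by
    refine intervalIntegral.integral_congr fun s hs => ?_
    rw [Set.uIcc_of_le htT] at hs
    exact hfeq s hs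
  have hkey : g t z - g t w =
      (z - w) * Complex.exp (-(∫ s in (0:ℝ)..t, Ψ s (g s z) (g s w))) := by
    have h1 : (g t z - g t w) * Complex.exp (I t) = z - w := hconst.trans h0
    rw [← hIt, Complex.exp_neg]
    field_simp at h1 ⊢
    linear_combination h1
  refine ⟨hkey, fun hzw hcontra => ?_⟩
  rw [sub_eq_zero.mpr hcontra] at hkey
  exact (mul_ne_zero (sub_ne_zero.mpr hzw) (Complex.exp_ne_zero _)) hkey.symm
end
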